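/- Let X and X' be nonempty convex subsets of R^T with the same linear span, and suppose the Hausdorff distance d_H(X, X') ≤ d. If x ∈ X' satisfies d(x, rbd X') > d (distance to the relative boundary of X'), then x ∈ X. -/

import Mathlib

open Metric

/-- The relative boundary of a set `C ⊂ ℝ^T`: its boundary within `span C`, i.e. points of
the closure of `C` that are not in the relative interior of `C`. -/
def rbd {T : ℕ} (C : Set (EuclideanSpace ℝ (Fin T))) : Set (EuclideanSpace ℝ (Fin T)) :=
  closure C \
    {y | ∃ ε > 0, Metric.ball y ε ∩ (Submodule.span ℝ C : Set (EuclideanSpace ℝ (Fin T))) ⊆ C}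

set_option maxHeartbeats 1000000 in
/-- Lemma `lm:FY` iii/iv: let `X, X'` be nonempty convex subsets of `ℝ^T`
with the same linear span and Hausdorff distance at most `d`. If `x ∈ X'` has distance to
the relative boundary of `X'` greater than `d`, then `x ∈ X`. -/
theorem mem_of_infDist_rbd_gt {T : ℕ} {X X' : Set (EuclideanSpace ℝ (Fin T))} {d : ℝ}
    (hXne : X.Nonempty) (hX'ne : X'.Nonempty)
    (hXconv : Convex ℝ X) (hX'conv : Convex ℝ X')
    (hspan : Submodule.span ℝ X = Submodule.span ℝ X')
    (hfin : EMetric.hausdorffEdist X X' ≠ ⊤)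
    (hH : Metric.hausdorffDist X X' ≤ d)
    {x : EuclideanSpace ℝ (Fin T)} (hx : x ∈ X')
    (hdist : d < Metric.infDist x (rbd X')) :
    x ∈ X := by
  classical
  have hd0 : 0 ≤ d := le_trans Metric.hausdorffDist_nonneg hH
  set V : Submodule ℝ (EuclideanSpace ℝ (Fin T)) := Submodule.span ℝ X' with hV
  have hxV : x ∈ V := Submodule.subset_span hx
  have hXV : X ⊆ (V : Set (EuclideanSpace ℝ (Fin T))) := by
    intro z hz
    have h1 : z ∈ Submodule.span ℝ X := Submodule.subset_span hz
    rw [hspan] at h1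
    exact h1
  have hVclosed : IsClosed (V : Set (EuclideanSpace ℝ (Fin T))) :=
    Submodule.closed_of_finiteDimensional V
  set r := Metric.infDist x (rbd X') with hr
  -- Claim A: the ball of radius r around x, intersected with V, lies in closure X'
  have claimA : ∀ y : EuclideanSpace ℝ (Fin T), y ∈ V → dist y x < r → y ∈ closure X' := by
    intro y hyV hyr
    by_contra hy
    have hyx : y ≠ x := fun h => hy (h ▸ subset_closure hx)
    have hnorm : 0 < ‖y - x‖ := by rwa [norm_sub_pos_iff]
    set S : Set ℝ := {t : ℝ | t ∈ Set.Icc (0:ℝ) 1 ∧ x + t • (y - x) ∈ closure X'} with hS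
    have hSne : S.Nonempty := ⟨0, ⟨le_refl 0, zero_le_one⟩, by
      simpa using subset_closure hx⟩
    have hSbdd : BddAbove S := ⟨1, fun t ht => ht.1.2⟩
    have hScl : IsClosed S := by
      have : S = Set.Icc (0:ℝ) 1 ∩ (fun t : ℝ => x + t • (y - x)) ⁻¹' closure X' := rfl
      rw [this]
      exact isClosed_Icc.inter (isClosed_closure.preimage
        (continuous_const.add (continuous_id.smul continuous_const)))
    set t₀ := sSup S with ht₀
    have ht₀S : t₀ ∈ S := hScl.csSup_mem hSne hSbdd
    set z := x + t₀ • (y - x) with hz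
    have hzcl : z ∈ closure X' := ht₀S.2
    have ht₀1 : t₀ < 1 := by
      rcases lt_or_eq_of_le ht₀S.1.2 with h | h
      · exact h
      · exfalso
        apply hy
        have h2 := ht₀S.2
        rw [h] at h2
        simpa using h2
    have hzrbd : z ∈ rbd X' := by
      refine ⟨hzcl, ?_⟩
      rintro ⟨ε, hε, hsub⟩
      set δ := min (1 - t₀) (ε / ‖y - x‖) / 2 with hδ
      have hδ0 : 0 < δ := half_pos (lt_min (by linarith) (div_pos hε hnorm))
      set t := t₀ + δ with ht
      have ht1 : t ≤ 1 := by
        have := min_le_left (1 - t₀) (ε / ‖y - x‖)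
        rw [ht, hδ]; linarith
      have ht02 : 0 ≤ t := by nlinarith [ht₀S.1.1]
      set w := x + t • (y - x) with hw
      have hwV : w ∈ V := Submodule.add_mem _ hxV
        (Submodule.smul_mem _ _ (Submodule.sub_mem _ hyV hxV))
      have hwz : w - z = δ • (y - x) := by rw [hw, hz, ht]; module
      have hwball : w ∈ Metric.ball z ε := by
        rw [Metric.mem_ball, dist_eq_norm, hwz, norm_smul, Real.norm_eq_abs,
          abs_of_pos hδ0]
        have h1 : δ ≤ (ε / ‖y - x‖) / 2 := by
          rw [hδ]
          have := min_le_right (1 - t₀) (ε / ‖y - x‖)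
          linarith
        have h2 : δ * ‖y - x‖ ≤ (ε / ‖y - x‖) / 2 * ‖y - x‖ := by
          exact mul_le_mul_of_nonneg_right h1 hnorm.le
        have h3 : (ε / ‖y - x‖) / 2 * ‖y - x‖ = ε / 2 := by
          field_simp
        nlinarith
      have hwX' : w ∈ X' := hsub ⟨hwball, hwV⟩
      have htS : t ∈ S := ⟨⟨ht02, ht1⟩, subset_closure hwX'⟩
      have := le_csSup hSbdd htS
      rw [← ht₀] at this
      have : t₀ < t := by rw [ht]; linarith
      linarith [le_csSup hSbdd htS]
    have h4 : r ≤ dist x z := Metric.infDist_le_dist_of_mem hzrbd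
    have h5 : dist x z = t₀ * ‖y - x‖ := by
      rw [hz, dist_self_add_right, norm_smul, Real.norm_eq_abs, abs_of_nonneg ht₀S.1.1]
    have h6 : dist y x = ‖y - x‖ := dist_eq_norm y x
    nlinarith [ht₀S.1.1, ht₀S.1.2]
  -- Claim B: the ball of radius r - d around x, intersected with V, lies in closure X
  have claimB : ∀ y : EuclideanSpace ℝ (Fin T), y ∈ V → dist y x < r - d → y ∈ closure X := by
    intro y hyV hyr
    by_contra hy
    have hKconv : Convex ℝ (closure X) := hXconv.closure
    have hKne : (closure X).Nonempty := hXne.closure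
    have hKV : closure X ⊆ (V : Set (EuclideanSpace ℝ (Fin T))) :=
      closure_minimal hXV hVclosed
    obtain ⟨p, hpK, hpmin⟩ := exists_norm_eq_iInf_of_complete_convex hKne
      isClosed_closure.isComplete hKconv y
    have hproj : ∀ w ∈ closure X, inner (𝕜 := ℝ) (y - p) (w - p) ≤ (0:ℝ) :=
      (norm_eq_iInf_iff_real_inner_le_zero hKconv hpK).1 hpmin
    set m := ‖y - p‖ with hm
    have hm0 : 0 < m := by
      rw [hm, norm_sub_pos_iff]
      rintro rfl
      exact hy hpK
    set t := (d + (r - dist y x)) / 2 with ht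
    have hdt : d < t := by rw [ht]; linarith
    have htr : dist y x + t < r := by rw [ht]; linarith
    set w := y + (t / m) • (y - p) with hw
    have hwV : w ∈ V := Submodule.add_mem _ hyV
      (Submodule.smul_mem _ _ (Submodule.sub_mem _ hyV (hKV hpK)))
    have htm : 0 ≤ t / m := div_nonneg (by linarith) hm0.le
    have hnormsmul : ‖(t / m) • (y - p)‖ = t := by
      rw [norm_smul, Real.norm_eq_abs, abs_of_nonneg htm, ← hm]
      field_simp
    have hwx : dist w x < r := by
      calc dist w x ≤ dist w y + dist y x := dist_triangle _ _ _
        _ = ‖(t / m) • (y - p)‖ + dist y x := by rw [hw, dist_self_add_left]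
        _ = t + dist y x := by rw [hnormsmul]
        _ < r := by linarith
    have hwA : w ∈ closure X' := claimA w hwV hwx
    have hle : Metric.infDist w X ≤ d := by
      have h1 : Metric.infDist w X ≤ Metric.infDist w X' + Metric.hausdorffDist X' X :=
        Metric.infDist_le_infDist_add_hausdorffDist (by rwa [EMetric.hausdorffEdist_comm])
      rw [Metric.infDist_zero_of_mem_closure hwA, Metric.hausdorffDist_comm] at h1
      linarith
    have hlow : ∀ z ∈ X, m + t ≤ dist w z := by
      intro z hz
      have h2 : inner (𝕜 := ℝ) (y - p) (z - p) ≤ (0:ℝ) := hproj z (subset_closure hz)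
      have h3 : inner (𝕜 := ℝ) (w - z) (y - p) ≤ ‖w - z‖ * ‖y - p‖ :=
        real_inner_le_norm _ _
      have hdecomp : w - z = (y - p) + (t / m) • (y - p) - (z - p) := by
        rw [hw]; module
      have h4 : inner (𝕜 := ℝ) (w - z) (y - p)
          = ‖y - p‖ ^ 2 + (t / m) * ‖y - p‖ ^ 2 - inner (𝕜 := ℝ) (y - p) (z - p) := by
        rw [hdecomp, inner_sub_left, inner_add_left, real_inner_smul_left,
          real_inner_self_eq_norm_sq, real_inner_comm (z - p) (y - p)]
      have h5 : t / m * m = t := div_mul_cancel₀ t hm0.ne'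
      have h6 : dist w z = ‖w - z‖ := dist_eq_norm w z
      nlinarith [h3, h4, h2, hm0]
    have hlt : Metric.infDist w X < m + t := by linarith
    obtain ⟨z, hz, hzd⟩ := (Metric.infDist_lt_iff hXne).1 hlt
    have h8 := hlow z hz
    linarith
  -- Now work in the subtype V
  have hrd : 0 < r - d := by linarith
  set C : Set V := (Subtype.val ⁻¹' X : Set V) with hC
  have hCconv : Convex ℝ C := hXconv.linear_preimage V.subtype
  have hCne : C.Nonempty := by
    obtain ⟨z, hz⟩ := hXne
    exact ⟨⟨z, hXV hz⟩, hz⟩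
  have hclosC : closure C = (Subtype.val ⁻¹' closure X : Set V) := by
    apply Set.Subset.antisymm
    · exact closure_minimal (Set.preimage_mono subset_closure)
        (isClosed_closure.preimage continuous_subtype_val)
    · intro y hy
      rw [_root_.mem_closure_iff]
      intro U hU hyU
      obtain ⟨W, hW, rfl⟩ := isOpen_induced_iff.1 hU
      obtain ⟨z, hzW, hzX⟩ := _root_.mem_closure_iff.1 hy W hW hyU
      exact ⟨⟨z, hXV hzX⟩, hzW, hzX⟩
  set x₀ : V := ⟨x, hxV⟩ with hx₀
  have hball : Metric.ball x₀ (r - d) ⊆ closure C := by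
    intro y hy
    rw [hclosC]
    exact claimB y.1 y.2 (by rwa [Metric.mem_ball, Subtype.dist_eq] at hy)
  have hx₀int : x₀ ∈ interior (closure C) :=
    mem_interior.2 ⟨Metric.ball x₀ (r - d), hball, Metric.isOpen_ball, Metric.mem_ball_self hrd⟩
  have hspanC : affineSpan ℝ C = ⊤ := by
    have h1 : closure C ⊆ (affineSpan ℝ C : Set V) :=
      closure_minimal (subset_affineSpan ℝ C) (affineSpan ℝ C).closed_of_finiteDimensional
    have h2 : affineSpan ℝ (closure C) = ⊤ := by
      apply affineSpan_eq_top_of_nonempty_interior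
      rw [hCconv.closure.convexHull_eq]
      exact ⟨x₀, hx₀int⟩
    have h3 : affineSpan ℝ (closure C) ≤ affineSpan ℝ C := affineSpan_le.2 h1
    rw [h2] at h3
    exact top_unique h3
  obtain ⟨z₀, hz₀⟩ := hCconv.interior_nonempty_iff_affineSpan_eq_top.2 hspanC
  set v : V := x₀ - z₀ with hv
  set s : ℝ := (r - d) / (2 * ‖v‖ + 1) with hs
  have hs0 : 0 < s := div_pos hrd (by positivity)
  have hy' : x₀ + s • v ∈ closure C := by
    apply hball
    rw [Metric.mem_ball, dist_self_add_left, norm_smul, Real.norm_eq_abs, abs_of_pos hs0]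
    rw [hs, div_mul_eq_mul_div, div_lt_iff₀ (by positivity)]
    nlinarith [norm_nonneg v]
  have h1s : (0:ℝ) < 1 + s := by linarith
  have hcombo : (s / (1 + s)) • z₀ + (1 / (1 + s)) • (x₀ + s • v) = x₀ := by
    rw [hv]
    match_scalars <;> field_simp <;> ring
  have hfin2 : x₀ ∈ interior C := by
    have h := hCconv.combo_interior_closure_mem_interior (a := s / (1 + s)) (b := 1 / (1 + s))
      hz₀ hy' (div_pos hs0 h1s) (by positivity) (by field_simp; ring)
    rwa [hcombo] at h
  have hxC : x₀ ∈ C := interior_subset hfin2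
  exact hxC
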